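/- arXiv:2412.07994 — 2 statements merged into one kernel-verified Lean document; each statement's English description precedes it below -/
import Mathlib

section
/- Let G be a group generated by a finite symmetric set with word length ℓ and H ≤ G a subgroup. Consider the following two conditions: (1) there exist constants M, s > 0 such that for all unit vectors ξ, η ∈ ℓ²(G/H), ∑_{γ∈G} |⟨λ_{G/H}(γ)ξ, η⟩|²/(1+ℓ(γ))^{2s} ≤ M; (2) there exist constants K, D > 0 such that for all unit vectors ξ, η ∈ ℓ²(G/H) and all R ≥ 0, ∑_{γ∈B(R)} |⟨λ_{G/H}(γ)ξ, η⟩|² ≤ K(R+1)^D. Then (1) and (2) are equivalent, and each of them implies both that G has the rapid decay property and that the pair (G,H) has the rapid decay property. -/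
open scoped BigOperators

attribute [local instance] Classical.propDecidable

section Defs

variable {G : Type*} [Group G]

/-- Word length with respect to a generating set `S`. -/
noncomputable def wordLength (S : Set G) (x : G) : ℕ :=
  sInf {n | ∃ l : List G, (∀ s ∈ l, s ∈ S) ∧ l.length = n ∧ l.prod = x}

/-- Convolution of finitely supported functions:
`(f * ϕ) x = ∑ z, f z * ϕ (z⁻¹ * x)`. -/
noncomputable def conv {k : Type*} [Semiring k] (f ϕ : G →₀ k) : G →₀ k :=
  f.sum fun z c => c • Finsupp.mapDomain (fun x => z * x) ϕ

/-- `n`-fold convolution power. -/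
noncomputable def convPow {k : Type*} [Semiring k] (f : G →₀ k) : ℕ → G →₀ k
  | 0 => Finsupp.single 1 1
  | n + 1 => conv f (convPow f n)

/-- ℓ² norm of a finitely supported function. -/
noncomputable def l2Norm {α k : Type*} [NormedAddCommGroup k] (f : α →₀ k) : ℝ :=
  Real.sqrt (∑ x ∈ f.support, ‖f x‖ ^ 2)

/-- ℓ¹ norm of a finitely supported function. -/
noncomputable def l1Norm {α k : Type*} [NormedAddCommGroup k] (f : α →₀ k) : ℝ :=
  ∑ x ∈ f.support, ‖f x‖

/-- The hybrid `(2,1)` norm with respect to the subgroup `H`: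
`‖f‖_{(2,1)} = sqrt (∑_{gH ∈ G/H} (∑_{x ∈ gH} |f x|)²)`. -/
noncomputable def l21Norm (H : Subgroup G) {k : Type*} [NormedAddCommGroup k]
    (f : G →₀ k) : ℝ :=
  l2Norm (Finsupp.mapDomain (QuotientGroup.mk : G → G ⧸ H) (f.mapRange norm norm_zero))

/-- Hybrid operator norm `‖f‖_h`. -/
noncomputable def hybridOpNorm (H : Subgroup G) (f : G →₀ ℂ) : ℝ :=
  sSup {c : ℝ | ∃ ϕ : G →₀ ℂ, l21Norm H ϕ ≤ 1 ∧ c = l21Norm H (conv f ϕ)}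

/-- Regular operator norm `‖f‖_*`. -/
noncomputable def regOpNorm (f : G →₀ ℂ) : ℝ :=
  sSup {c : ℝ | ∃ ξ : G →₀ ℂ, l2Norm ξ ≤ 1 ∧ c = l2Norm (conv f ξ)}

/-- The quasi-regular representation:
`(λ_{G/H}(f) ξ)(gH) = ∑ z, f z * ξ (z⁻¹ g H)`. -/
noncomputable def quasiReg (H : Subgroup G) (f : G →₀ ℂ) (ξ : (G ⧸ H) →₀ ℂ) :
    (G ⧸ H) →₀ ℂ :=
  f.sum fun z c => c • Finsupp.mapDomain (fun q => z • q) ξ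

/-- Quasi-regular operator norm `‖λ_{G/H}(f)‖`. -/
noncomputable def quasiRegOpNorm (H : Subgroup G) (f : G →₀ ℂ) : ℝ :=
  sSup {c : ℝ | ∃ ξ : (G ⧸ H) →₀ ℂ, l2Norm ξ ≤ 1 ∧ c = l2Norm (quasiReg H f ξ)}

/-- Embed a real finitely supported function into the complex valued ones. -/
noncomputable def toC {α : Type*} (f : α →₀ ℝ) : α →₀ ℂ :=
  f.mapRange Complex.ofReal Complex.ofReal_zero

/-- Pointwise weight of a function by `(1 + ℓ)^s`. -/
noncomputable def weight (S : Set G) (s : ℝ) (f : G →₀ ℂ) : G →₀ ℂ where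
  support := f.support
  toFun x := ((((1 : ℝ) + (wordLength S x : ℝ)) ^ s : ℝ) : ℂ) * f x
  mem_support_toFun x := by
    simp only [Finsupp.mem_support_iff]
    have hpos : (0 : ℝ) < ((1 : ℝ) + (wordLength S x : ℝ)) ^ s :=
      Real.rpow_pos_of_pos (by positivity) s
    constructor
    · intro hf h
      rcases mul_eq_zero.mp h with h1 | h2
      · exact hpos.ne' (by exact_mod_cast h1)
      · exact hf h2
    · intro h hf
      exact h (by rw [hf, mul_zero])

/-- The involution `f⋆ x = f x⁻¹`. -/
noncomputable def starFun {k : Type*} [Zero k] (f : G →₀ k) : G →₀ k :=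
  Finsupp.equivMapDomain (Equiv.inv G) f

/-- Sum of the values of `g` over the subgroup `H`. -/
noncomputable def sumOverSubgroup (H : Subgroup G) (g : G →₀ ℝ) : ℝ :=
  ∑ x ∈ g.support.filter (fun x => x ∈ H), g x

/-- `f` is supported in the ball of radius `R` for the word length of `S`. -/
def supportedInBall (S : Set G) (R : ℕ) {k : Type*} [Zero k] (f : G →₀ k) : Prop :=
  ∀ x ∈ f.support, wordLength S x ≤ R

/-- Rapid decay property for the pair `(G, H)`. -/
def PairRD (S : Set G) (H : Subgroup G) : Prop :=
  ∃ C : ℝ, ∃ D : ℕ, 0 ≤ C ∧ ∀ (R : ℕ) (f ϕ : G →₀ ℂ), supportedInBall S R f →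
    l21Norm H (conv f ϕ) ≤ C * ((R : ℝ) + 1) ^ D * l21Norm H f * l21Norm H ϕ

/-- Rapid decay property for the group `G`. -/
def GroupRD (S : Set G) : Prop :=
  ∃ C : ℝ, ∃ D : ℕ, 0 ≤ C ∧ ∀ (R : ℕ) (f ϕ : G →₀ ℂ), supportedInBall S R f →
    l2Norm (conv f ϕ) ≤ C * ((R : ℝ) + 1) ^ D * l2Norm f * l2Norm ϕ

/-- Polynomial growth of a subgroup for the induced length. -/
def polyGrowthSubgroup (S : Set G) (H : Subgroup G) : Prop :=
  ∃ C : ℝ, ∃ D : ℕ, 0 ≤ C ∧ ∀ R : ℕ,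
    (Set.ncard {x : G | x ∈ H ∧ wordLength S x ≤ R} : ℝ) ≤ C * ((R : ℝ) + 1) ^ D

/-- Polynomial growth of the coset space `G/H`. -/
def polyGrowthQuotient (S : Set G) (H : Subgroup G) : Prop :=
  ∃ C : ℝ, ∃ D : ℕ, 0 ≤ C ∧ ∀ R : ℕ,
    (Set.ncard ((QuotientGroup.mk : G → G ⧸ H) '' {x : G | wordLength S x ≤ R}) : ℝ) ≤
      C * ((R : ℝ) + 1) ^ D

/-- Co-amenability of `H` in `G`: Følner condition for the left action on `G/H`. -/
def Coamenable (H : Subgroup G) : Prop :=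
  ∀ ε : ℝ, 0 < ε → ∀ F : Finset G, ∃ V : Finset (G ⧸ H), V.Nonempty ∧
    ((symmDiff (Finset.image₂ (· • ·) F V) V).card : ℝ) ≤ ε * (V.card : ℝ)

/-- Matrix coefficient `⟨λ_{G/H}(γ) ξ, η⟩` of the quasi-regular representation
on `ℓ²(G/H)`. -/
noncomputable def qrCoeff (H : Subgroup G) (γ : G)
    (ξ η : lp (fun _ : G ⧸ H => ℂ) 2) : ℂ :=
  ∑' q : G ⧸ H, ξ (γ⁻¹ • q) * (starRingEnd ℂ) (η q)

/-- The spectral radius of the random walk induced on `G/H`: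
`ρ = limsup P_{2n}(H,H)^{1/(2n)}`. -/
noncomputable def specRadQuot (H : Subgroup G) (μ : G →₀ ℝ) : ℝ :=
  Filter.limsup (fun n : ℕ =>
    (sumOverSubgroup H (convPow μ (2 * n))) ^ ((1 : ℝ) / (2 * (n : ℝ)))) Filter.atTop

end Defs
/-- Condition (1) of STATEMENT 10: weighted square-summability of the matrix
coefficients of the quasi-regular representation (stated via uniformly bounded
partial sums). -/
def qrCoeffDecay {G : Type*} [Group G] (S : Set G) (H : Subgroup G) : Prop :=
  ∃ M s : ℝ, 0 < M ∧ 0 < s ∧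
    ∀ ξ η : lp (fun _ : G ⧸ H => ℂ) 2, ‖ξ‖ = 1 → ‖η‖ = 1 →
      ∀ F : Finset G,
        ∑ γ ∈ F, ‖qrCoeff H γ ξ η‖ ^ 2 / ((1 : ℝ) + (wordLength S γ : ℝ)) ^ (2 * s)
          ≤ M

/-- Condition (2) of STATEMENT 10: polynomial bound on the square sums of the
matrix coefficients over balls. -/
def qrCoeffPolyBound {G : Type*} [Group G] (S : Set G) (H : Subgroup G) : Prop :=
  ∃ K D : ℝ, 0 < K ∧ 0 < D ∧
    ∀ ξ η : lp (fun _ : G ⧸ H => ℂ) 2, ‖ξ‖ = 1 → ‖η‖ = 1 →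
      ∀ (R : ℕ) (F : Finset G), (∀ γ ∈ F, wordLength S γ ≤ R) →
        ∑ γ ∈ F, ‖qrCoeff H γ ξ η‖ ^ 2 ≤ K * ((R : ℝ) + 1) ^ D

section Aux
set_option linter.unusedSectionVars false
open Finsupp Finset

variable {G : Type*} [Group G] {H : Subgroup G}

lemma conv_apply' (f ϕ : G →₀ ℂ) (x : G) :
    conv f ϕ x = ∑ z ∈ f.support, f z * ϕ (z⁻¹ * x) := by
  unfold conv
  rw [Finsupp.sum_apply, Finsupp.sum]
  refine Finset.sum_congr rfl fun z hz => ?_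
  rw [Finsupp.smul_apply, smul_eq_mul]
  congr 1
  rw [← Finsupp.mapDomain_apply (mul_right_injective z) ϕ (z⁻¹ * x), mul_inv_cancel_left]

lemma mapDomain_mapRange_fiber {Q : Type*} (k : G → Q) (h : ℂ → ℝ) (h0 : h 0 = 0)
    (ϕ : G →₀ ℂ) (q : Q) :
    Finsupp.mapDomain k (ϕ.mapRange h h0) q
      = ∑ x ∈ ϕ.support.filter (fun x => k x = q), h (ϕ x) := by
  classical
  rw [Finsupp.mapDomain, Finsupp.sum_apply, Finsupp.sum, Finset.sum_filter]
  rw [Finset.sum_subset (Finsupp.support_mapRange (f := h) (hf := h0) (g := ϕ))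
      (fun x _ hx => by
        rw [Finsupp.notMem_support_iff.1 hx, Finsupp.single_zero, Finsupp.coe_zero,
          Pi.zero_apply])]
  refine Finset.sum_congr rfl fun x hx => ?_
  rw [Finsupp.mapRange_apply, Finsupp.single_apply]

end Aux
set_option linter.unusedSectionVars false

section Aux2
open Finsupp Finset

variable {G : Type*} [Group G] {H : Subgroup G}

lemma l2Norm_nonneg {α k : Type*} [NormedAddCommGroup k] (f : α →₀ k) : 0 ≤ l2Norm f :=
  Real.sqrt_nonneg _

lemma l2Norm_eq_sqrt {α k : Type*} [NormedAddCommGroup k] (f : α →₀ k) {T : Finset α}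
    (hT : f.support ⊆ T) : l2Norm f = Real.sqrt (∑ x ∈ T, ‖f x‖ ^ 2) := by
  rw [l2Norm]
  congr 1
  refine Finset.sum_subset hT fun x _ hx => ?_
  rw [Finsupp.notMem_support_iff.1 hx, norm_zero]
  norm_num

lemma l2Norm_sq_eq {α k : Type*} [NormedAddCommGroup k] (f : α →₀ k) {T : Finset α}
    (hT : f.support ⊆ T) : l2Norm f ^ 2 = ∑ x ∈ T, ‖f x‖ ^ 2 := by
  rw [l2Norm_eq_sqrt f hT, Real.sq_sqrt (Finset.sum_nonneg fun x _ => sq_nonneg _)]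

lemma l2Norm_pos {α k : Type*} [NormedAddCommGroup k] {f : α →₀ k} (hf : f ≠ 0) :
    0 < l2Norm f := by
  rw [l2Norm, Real.sqrt_pos]
  obtain ⟨x, hx⟩ := Finsupp.support_nonempty_iff.2 hf
  refine Finset.sum_pos' (fun y _ => sq_nonneg _) ⟨x, hx, ?_⟩
  have h := Finsupp.mem_support_iff.1 hx
  have : 0 < ‖f x‖ := norm_pos_iff.2 h
  positivity

lemma l2Norm_smul (c : ℝ) {α : Type*} (u : α →₀ ℝ) : l2Norm (c • u) = |c| * l2Norm u := by
  rw [l2Norm_eq_sqrt (c • u) (Finsupp.support_smul), l2Norm]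
  have : ∀ x ∈ u.support, ‖(c • u) x‖ ^ 2 = c ^ 2 * ‖u x‖ ^ 2 := fun x _ => by
    rw [Finsupp.smul_apply, smul_eq_mul, norm_mul, mul_pow, Real.norm_eq_abs, sq_abs]
  rw [Finset.sum_congr rfl this, ← Finset.mul_sum, Real.sqrt_mul (sq_nonneg c),
    Real.sqrt_sq_eq_abs]

end Aux2
section Aux3
open Finsupp Finset
open scoped ENNReal

variable {G : Type*} [Group G]

/-- Coset-wise ℓ¹ mass. -/
noncomputable def cL1 (H : Subgroup G) (ϕ : G →₀ ℂ) : (G ⧸ H) →₀ ℝ :=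
  Finsupp.mapDomain (QuotientGroup.mk : G → G ⧸ H) (ϕ.mapRange norm norm_zero)

/-- Coset-wise ℓ² mass. -/
noncomputable def cL2 (H : Subgroup G) (ϕ : G →₀ ℂ) : (G ⧸ H) →₀ ℝ :=
  (Finsupp.mapDomain (QuotientGroup.mk : G → G ⧸ H)
    (ϕ.mapRange (fun c => ‖c‖ ^ 2) (by simp))).mapRange Real.sqrt Real.sqrt_zero

variable {H : Subgroup G}

lemma l21Norm_eq_cL1 (ϕ : G →₀ ℂ) : l21Norm H ϕ = l2Norm (cL1 H ϕ) := rfl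

lemma cL1_apply (ϕ : G →₀ ℂ) (q : G ⧸ H) :
    cL1 H ϕ q = ∑ x ∈ ϕ.support.filter (fun x => (QuotientGroup.mk x : G ⧸ H) = q), ‖ϕ x‖ := by
  rw [cL1, mapDomain_mapRange_fiber]
  congr

lemma cL1_nonneg (ϕ : G →₀ ℂ) (q : G ⧸ H) : 0 ≤ cL1 H ϕ q := by
  rw [cL1_apply]; exact Finset.sum_nonneg fun x _ => norm_nonneg _

lemma cL2_apply (ϕ : G →₀ ℂ) (q : G ⧸ H) :
    cL2 H ϕ q = Real.sqrt
      (∑ x ∈ ϕ.support.filter (fun x => (QuotientGroup.mk x : G ⧸ H) = q), ‖ϕ x‖ ^ 2) := by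
  rw [cL2, Finsupp.mapRange_apply, mapDomain_mapRange_fiber]
  congr

lemma cL2_nonneg (ϕ : G →₀ ℂ) (q : G ⧸ H) : 0 ≤ cL2 H ϕ q := by
  rw [cL2_apply]; exact Real.sqrt_nonneg _

lemma cL2_sq (ϕ : G →₀ ℂ) (q : G ⧸ H) :
    cL2 H ϕ q ^ 2
      = ∑ x ∈ ϕ.support.filter (fun x => (QuotientGroup.mk x : G ⧸ H) = q), ‖ϕ x‖ ^ 2 := by
  rw [cL2_apply, Real.sq_sqrt (Finset.sum_nonneg fun x _ => sq_nonneg _)]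

/-- A real finitely supported function on `G ⧸ H` as an element of `ℓ²(G/H)`. -/
noncomputable def rlp (H : Subgroup G) (u : (G ⧸ H) →₀ ℝ) : lp (fun _ : G ⧸ H => ℂ) 2 :=
  ⟨fun q => (u q : ℂ), memℓp_gen (by
    refine summable_of_ne_finset_zero (s := u.support) fun q hq => ?_
    rw [Finsupp.notMem_support_iff.1 hq]
    simp [Real.zero_rpow])⟩

lemma rlp_apply (u : (G ⧸ H) →₀ ℝ) (q : G ⧸ H) : (rlp H u) q = (u q : ℂ) := rfl

lemma rlp_norm (u : (G ⧸ H) →₀ ℝ) : ‖rlp H u‖ = l2Norm u := by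
  have hp : (0 : ℝ) < (2 : ℝ≥0∞).toReal := by norm_num
  rw [lp.norm_eq_tsum_rpow hp]
  have hoff : ∀ q ∉ u.support, ‖(rlp H u) q‖ ^ (2 : ℝ≥0∞).toReal = 0 := fun q hq => by
    rw [rlp_apply, Finsupp.notMem_support_iff.1 hq]
    simp [Real.zero_rpow]
  rw [tsum_eq_sum hoff]
  have : ∀ q ∈ u.support, ‖(rlp H u) q‖ ^ (2 : ℝ≥0∞).toReal = ‖u q‖ ^ 2 := fun q _ => by
    rw [rlp_apply, Complex.norm_real]
    norm_num
  rw [Finset.sum_congr rfl this, l2Norm, Real.sqrt_eq_rpow]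
  norm_num

lemma qrCoeff_rlp (z : G) (u w : (G ⧸ H) →₀ ℝ) (hu : ∀ q, 0 ≤ u q) (hw : ∀ q, 0 ≤ w q) :
    ‖qrCoeff H z (rlp H u) (rlp H w)‖ = ∑ q ∈ w.support, u (z⁻¹ • q) * w q := by
  unfold qrCoeff
  rw [tsum_eq_sum (s := w.support) (fun q hq => by
    rw [rlp_apply, rlp_apply, Finsupp.notMem_support_iff.1 hq]
    simp)]
  have : ∀ q ∈ w.support,
      (rlp H u) (z⁻¹ • q) * (starRingEnd ℂ) ((rlp H w) q) = ((u (z⁻¹ • q) * w q : ℝ) : ℂ) :=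
    fun q _ => by rw [rlp_apply, rlp_apply, Complex.conj_ofReal, ← Complex.ofReal_mul]
  rw [Finset.sum_congr rfl this, ← Complex.ofReal_sum, Complex.norm_real, Real.norm_eq_abs,
    abs_of_nonneg (Finset.sum_nonneg fun q _ => mul_nonneg (hu _) (hw _))]

end Aux3
section Aux4
open Finsupp Finset
open scoped ENNReal

variable {G : Type*} [Group G] {H : Subgroup G}

lemma core (S : Set G) (H : Subgroup G) {K D : ℝ} (hK : 0 < K)
    (h2 : ∀ ξ η : lp (fun _ : G ⧸ H => ℂ) 2, ‖ξ‖ = 1 → ‖η‖ = 1 →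
      ∀ (R : ℕ) (F : Finset G), (∀ γ ∈ F, wordLength S γ ≤ R) →
        ∑ γ ∈ F, ‖qrCoeff H γ ξ η‖ ^ 2 ≤ K * ((R : ℝ) + 1) ^ D)
    (R : ℕ) (f : G →₀ ℂ) (hf : supportedInBall S R f)
    (u w : (G ⧸ H) →₀ ℝ) (hu : ∀ q, 0 ≤ u q) (hw : ∀ q, 0 ≤ w q) (Q : Finset (G ⧸ H)) :
    ∑ z ∈ f.support, ‖f z‖ * (∑ q ∈ Q, u (z⁻¹ • q) * w q)
      ≤ Real.sqrt (K * ((R : ℝ) + 1) ^ D) * (l2Norm f * (l2Norm u * l2Norm w)) := by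
  have hRHS0 : (0 : ℝ) ≤ Real.sqrt (K * ((R : ℝ) + 1) ^ D) *
      (l2Norm f * (l2Norm u * l2Norm w)) :=
    mul_nonneg (Real.sqrt_nonneg _) (mul_nonneg (l2Norm_nonneg _)
      (mul_nonneg (l2Norm_nonneg _) (l2Norm_nonneg _)))
  by_cases hu0 : u = 0
  · refine le_trans (le_of_eq ?_) hRHS0
    simp [hu0]
  by_cases hw0 : w = 0
  · refine le_trans (le_of_eq ?_) hRHS0
    simp [hw0]
  set a := l2Norm u with ha'
  set b := l2Norm w with hb'
  have ha : 0 < a := l2Norm_pos hu0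
  have hb : 0 < b := l2Norm_pos hw0
  set u' : (G ⧸ H) →₀ ℝ := a⁻¹ • u with hu'def
  set w' : (G ⧸ H) →₀ ℝ := b⁻¹ • w with hw'def
  have hu'n : ∀ q, 0 ≤ u' q := fun q => by
    rw [hu'def, Finsupp.smul_apply, smul_eq_mul]
    exact mul_nonneg (inv_nonneg.2 ha.le) (hu q)
  have hw'n : ∀ q, 0 ≤ w' q := fun q => by
    rw [hw'def, Finsupp.smul_apply, smul_eq_mul]
    exact mul_nonneg (inv_nonneg.2 hb.le) (hw q)
  have hu'1 : l2Norm u' = 1 := by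
    rw [hu'def, l2Norm_smul, abs_of_nonneg (inv_nonneg.2 ha.le), ← ha', inv_mul_cancel₀ ha.ne']
  have hw'1 : l2Norm w' = 1 := by
    rw [hw'def, l2Norm_smul, abs_of_nonneg (inv_nonneg.2 hb.le), ← hb', inv_mul_cancel₀ hb.ne']
  have hw's : w'.support = w.support := by
    rw [hw'def]
    exact Finsupp.support_smul_eq (inv_ne_zero hb.ne')
  -- reduce the sum over `Q` to a sum over `w.support`
  have hQ : ∀ z : G, ∑ q ∈ Q, u (z⁻¹ • q) * w q ≤ ∑ q ∈ w.support, u (z⁻¹ • q) * w q := by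
    intro z
    rw [← Finset.sum_filter_of_ne (p := fun q => q ∈ w.support)
      (fun q _ hne => Finsupp.mem_support_iff.2 fun h0 => hne (by rw [h0, mul_zero]))]
    exact Finset.sum_le_sum_of_subset_of_nonneg
      (fun q hq => (Finset.mem_filter.1 hq).2)
      (fun q _ _ => mul_nonneg (hu _) (hw _))
  set c : G → ℝ := fun z => ‖qrCoeff H z (rlp H u') (rlp H w')‖ with hc'
  have hc : ∀ z : G, ∑ q ∈ w.support, u (z⁻¹ • q) * w q = a * b * c z := by
    intro z
    show ∑ q ∈ w.support, u (z⁻¹ • q) * w q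
      = a * b * ‖qrCoeff H z (rlp H u') (rlp H w')‖
    rw [qrCoeff_rlp z u' w' hu'n hw'n, hw's, Finset.mul_sum]
    refine Finset.sum_congr rfl fun q hq => ?_
    rw [hu'def, hw'def, Finsupp.smul_apply, Finsupp.smul_apply, smul_eq_mul, smul_eq_mul]
    field_simp
  have hcs : ∑ z ∈ f.support, c z ^ 2 ≤ K * ((R : ℝ) + 1) ^ D :=
    h2 (rlp H u') (rlp H w') (by rw [rlp_norm, hu'1]) (by rw [rlp_norm, hw'1]) R f.support
      (fun z hz => hf z hz)
  calc ∑ z ∈ f.support, ‖f z‖ * (∑ q ∈ Q, u (z⁻¹ • q) * w q)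
      ≤ ∑ z ∈ f.support, ‖f z‖ * (a * b * c z) := by
        refine Finset.sum_le_sum fun z _ => ?_
        rw [← hc z]
        exact mul_le_mul_of_nonneg_left (hQ z) (norm_nonneg _)
    _ = a * b * ∑ z ∈ f.support, ‖f z‖ * c z := by
        rw [Finset.mul_sum]
        exact Finset.sum_congr rfl fun z _ => by ring
    _ ≤ a * b * (Real.sqrt (∑ z ∈ f.support, ‖f z‖ ^ 2) *
          Real.sqrt (∑ z ∈ f.support, c z ^ 2)) :=
        mul_le_mul_of_nonneg_left (Real.sum_mul_le_sqrt_mul_sqrt _ _ _)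
          (mul_nonneg ha.le hb.le)
    _ ≤ a * b * (l2Norm f * Real.sqrt (K * ((R : ℝ) + 1) ^ D)) := by
        refine mul_le_mul_of_nonneg_left ?_ (mul_nonneg ha.le hb.le)
        rw [← l2Norm_eq_sqrt f subset_rfl]
        exact mul_le_mul_of_nonneg_left (Real.sqrt_le_sqrt hcs) (l2Norm_nonneg _)
    _ = Real.sqrt (K * ((R : ℝ) + 1) ^ D) * (l2Norm f * (l2Norm u * l2Norm w)) := by
        rw [← ha', ← hb']; ring

end Aux4
section Aux5
open Finsupp Finset

variable {G : Type*} [Group G] {H : Subgroup G}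

lemma conv_norm_le (f ϕ : G →₀ ℂ) (x : G) :
    ‖conv f ϕ x‖ ≤ ∑ z ∈ f.support, ‖f z‖ * ‖ϕ (z⁻¹ * x)‖ := by
  rw [conv_apply']
  refine (norm_sum_le _ _).trans (Finset.sum_le_sum fun z _ => ?_)
  rw [norm_mul]

lemma cL2_support_sub (ϕ : G →₀ ℂ) :
    (cL2 H ϕ).support ⊆ ϕ.support.image (QuotientGroup.mk : G → G ⧸ H) := by
  intro q hq
  by_contra hq'
  refine Finsupp.mem_support_iff.1 hq ?_
  rw [cL2_apply]
  rw [Finset.filter_false_of_mem fun x hx hmk => hq' (Finset.mem_image.2 ⟨x, hx, hmk⟩)]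
  simp

lemma cL1_support_sub (ϕ : G →₀ ℂ) :
    (cL1 H ϕ).support ⊆ ϕ.support.image (QuotientGroup.mk : G → G ⧸ H) := by
  intro q hq
  by_contra hq'
  refine Finsupp.mem_support_iff.1 hq ?_
  rw [cL1_apply]
  rw [Finset.filter_false_of_mem fun x hx hmk => hq' (Finset.mem_image.2 ⟨x, hx, hmk⟩)]
  simp

lemma cL2_l2 (ϕ : G →₀ ℂ) : l2Norm (cL2 H ϕ) = l2Norm ϕ := by
  have h1 : l2Norm (cL2 H ϕ) ^ 2 = l2Norm ϕ ^ 2 := by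
    rw [l2Norm_sq_eq _ (cL2_support_sub ϕ), l2Norm_sq_eq ϕ subset_rfl]
    have h : ∀ q ∈ ϕ.support.image (QuotientGroup.mk : G → G ⧸ H),
        ‖cL2 H ϕ q‖ ^ 2 = ∑ x ∈ ϕ.support.filter
          (fun x => (QuotientGroup.mk x : G ⧸ H) = q), ‖ϕ x‖ ^ 2 := fun q _ => by
      rw [Real.norm_eq_abs, sq_abs, cL2_sq]
    rw [Finset.sum_congr rfl h,
      Finset.sum_fiberwise_of_maps_to (fun x hx => Finset.mem_image_of_mem _ hx)]
  have h2 := congrArg Real.sqrt h1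
  rwa [Real.sqrt_sq (l2Norm_nonneg _), Real.sqrt_sq (l2Norm_nonneg _)] at h2

lemma l2_le_cL1 (f : G →₀ ℂ) : l2Norm f ≤ l2Norm (cL1 H f) := by
  have h1 : l2Norm f ^ 2 ≤ l2Norm (cL1 H f) ^ 2 := by
    rw [l2Norm_sq_eq f subset_rfl, l2Norm_sq_eq _ (cL1_support_sub f),
      ← Finset.sum_fiberwise_of_maps_to (fun x hx => Finset.mem_image_of_mem
        (QuotientGroup.mk : G → G ⧸ H) hx) (fun x => ‖f x‖ ^ 2)]
    refine Finset.sum_le_sum fun q _ => ?_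
    rw [Real.norm_eq_abs, sq_abs, cL1_apply]
    exact Finset.sum_sq_le_sq_sum_of_nonneg fun x _ => norm_nonneg _
  have h2 := Real.sqrt_le_sqrt h1
  rwa [Real.sqrt_sq (l2Norm_nonneg _), Real.sqrt_sq (l2Norm_nonneg _)] at h2

lemma sum_shift_le_cL2 (ϕ : G →₀ ℂ) (z : G) (q : G ⧸ H) (T : Finset G)
    (hT : ∀ x ∈ T, (QuotientGroup.mk x : G ⧸ H) = q) :
    ∑ x ∈ T, ‖ϕ (z⁻¹ * x)‖ ^ 2 ≤ cL2 H ϕ (z⁻¹ • q) ^ 2 := by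
  rw [cL2_sq]
  have himg : ∑ y ∈ T.image (fun x => z⁻¹ * x), ‖ϕ y‖ ^ 2 = ∑ x ∈ T, ‖ϕ (z⁻¹ * x)‖ ^ 2 :=
    Finset.sum_image (fun a _ b _ h => by exact mul_left_cancel h)
  rw [← himg]
  rw [← Finset.sum_filter_of_ne (p := fun y => y ∈ ϕ.support)
    (fun y _ hy => Finsupp.mem_support_iff.2 fun h0 => hy (by rw [h0]; simp))]
  refine Finset.sum_le_sum_of_subset_of_nonneg ?_ fun y _ _ => sq_nonneg _
  intro y hy
  rcases Finset.mem_filter.1 hy with ⟨hyim, hysup⟩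
  rcases Finset.mem_image.1 hyim with ⟨x, hxT, rfl⟩
  refine Finset.mem_filter.2 ⟨hysup, ?_⟩
  rw [← hT x hxT]
  rfl

lemma sum_shift_le_cL1 (ϕ : G →₀ ℂ) (z : G) (q : G ⧸ H) (T : Finset G)
    (hT : ∀ x ∈ T, (QuotientGroup.mk x : G ⧸ H) = q) :
    ∑ x ∈ T, ‖ϕ (z⁻¹ * x)‖ ≤ cL1 H ϕ (z⁻¹ • q) := by
  rw [cL1_apply]
  have himg : ∑ y ∈ T.image (fun x => z⁻¹ * x), ‖ϕ y‖ = ∑ x ∈ T, ‖ϕ (z⁻¹ * x)‖ :=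
    Finset.sum_image (fun a _ b _ h => by exact mul_left_cancel h)
  rw [← himg]
  rw [← Finset.sum_filter_of_ne (p := fun y => y ∈ ϕ.support)
    (fun y _ hy => Finsupp.mem_support_iff.2 fun h0 => hy (by rw [h0]; simp))]
  refine Finset.sum_le_sum_of_subset_of_nonneg ?_ fun y _ _ => norm_nonneg _
  intro y hy
  rcases Finset.mem_filter.1 hy with ⟨hyim, hysup⟩
  rcases Finset.mem_image.1 hyim with ⟨x, hxT, rfl⟩
  refine Finset.mem_filter.2 ⟨hysup, ?_⟩
  rw [← hT x hxT]
  rfl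

lemma sqrt_poly_le {K D : ℝ} (hK : 0 ≤ K) (hD : 0 ≤ D) (R : ℕ) :
    Real.sqrt (K * ((R : ℝ) + 1) ^ D) ≤ Real.sqrt K * ((R : ℝ) + 1) ^ (⌈D⌉₊ : ℕ) := by
  have h1 : (1 : ℝ) ≤ (R : ℝ) + 1 := by
    have : (0 : ℝ) ≤ (R : ℝ) := Nat.cast_nonneg R
    linarith
  have h2 : (1 : ℝ) ≤ ((R : ℝ) + 1) ^ D := by
    have := Real.rpow_le_rpow zero_le_one h1 hD
    rwa [Real.one_rpow] at this
  rw [Real.sqrt_mul hK]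
  refine mul_le_mul_of_nonneg_left ?_ (Real.sqrt_nonneg _)
  calc Real.sqrt (((R : ℝ) + 1) ^ D) ≤ ((R : ℝ) + 1) ^ D :=
        Real.sqrt_le_iff.2 ⟨by linarith, by nlinarith⟩
    _ ≤ ((R : ℝ) + 1) ^ ((⌈D⌉₊ : ℕ) : ℝ) :=
        Real.rpow_le_rpow_of_exponent_le h1 (Nat.le_ceil D)
    _ = ((R : ℝ) + 1) ^ (⌈D⌉₊ : ℕ) := Real.rpow_natCast _ _

end Aux5
section Aux6
open Finsupp Finset

variable {G : Type*} [Group G]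

lemma groupRD_of_polyBound (S : Set G) (H : Subgroup G) (hq : qrCoeffPolyBound S H) :
    GroupRD S := by
  obtain ⟨K, D, hK, hD, h2⟩ := hq
  refine ⟨Real.sqrt K, ⌈D⌉₊, Real.sqrt_nonneg _, ?_⟩
  intro R f ϕ hf
  set g : G →₀ ℂ := conv f ϕ with hg
  have hRHS0 : (0 : ℝ) ≤ Real.sqrt K * ((R : ℝ) + 1) ^ (⌈D⌉₊ : ℕ) * l2Norm f * l2Norm ϕ := by
    have h1 : (0:ℝ) ≤ ((R : ℝ) + 1) ^ (⌈D⌉₊ : ℕ) := by positivity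
    exact mul_nonneg (mul_nonneg (mul_nonneg (Real.sqrt_nonneg _) h1) (l2Norm_nonneg _))
      (l2Norm_nonneg _)
  have key : l2Norm g ^ 2
      ≤ Real.sqrt (K * ((R : ℝ) + 1) ^ D) * (l2Norm f * (l2Norm ϕ * l2Norm g)) := by
    have h3 := core S H hK h2 R f hf (cL2 H ϕ) (cL2 H g) (cL2_nonneg ϕ) (cL2_nonneg g)
      (g.support.image (QuotientGroup.mk : G → G ⧸ H))
    rw [cL2_l2, cL2_l2] at h3
    refine le_trans ?_ h3
    rw [l2Norm_sq_eq g subset_rfl]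
    calc ∑ x ∈ g.support, ‖g x‖ ^ 2
        ≤ ∑ x ∈ g.support, (∑ z ∈ f.support, ‖f z‖ * ‖ϕ (z⁻¹ * x)‖) * ‖g x‖ := by
          refine Finset.sum_le_sum fun x _ => ?_
          rw [sq]
          exact mul_le_mul_of_nonneg_right (conv_norm_le f ϕ x) (norm_nonneg _)
      _ = ∑ z ∈ f.support, ‖f z‖ * ∑ x ∈ g.support, ‖ϕ (z⁻¹ * x)‖ * ‖g x‖ := by
          simp_rw [Finset.sum_mul, Finset.mul_sum, mul_assoc]
          exact Finset.sum_comm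
      _ ≤ ∑ z ∈ f.support, ‖f z‖ * ∑ q ∈ g.support.image (QuotientGroup.mk : G → G ⧸ H),
            cL2 H ϕ (z⁻¹ • q) * cL2 H g q := by
          refine Finset.sum_le_sum fun z _ => ?_
          refine mul_le_mul_of_nonneg_left ?_ (norm_nonneg _)
          rw [← Finset.sum_fiberwise_of_maps_to
            (fun x hx => Finset.mem_image_of_mem (QuotientGroup.mk : G → G ⧸ H) hx)
            (fun x => ‖ϕ (z⁻¹ * x)‖ * ‖g x‖)]
          refine Finset.sum_le_sum fun q _ => ?_
          calc ∑ x ∈ g.support.filter (fun x => (QuotientGroup.mk x : G ⧸ H) = q),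
                ‖ϕ (z⁻¹ * x)‖ * ‖g x‖
              ≤ Real.sqrt (∑ x ∈ g.support.filter
                    (fun x => (QuotientGroup.mk x : G ⧸ H) = q), ‖ϕ (z⁻¹ * x)‖ ^ 2) *
                Real.sqrt (∑ x ∈ g.support.filter
                    (fun x => (QuotientGroup.mk x : G ⧸ H) = q), ‖g x‖ ^ 2) :=
                Real.sum_mul_le_sqrt_mul_sqrt _ _ _
            _ ≤ cL2 H ϕ (z⁻¹ • q) * cL2 H g q := by
                refine mul_le_mul ?_ ?_ (Real.sqrt_nonneg _) (cL2_nonneg _ _)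
                · have := sum_shift_le_cL2 ϕ z q
                    (g.support.filter (fun x => (QuotientGroup.mk x : G ⧸ H) = q))
                    (fun x hx => (Finset.mem_filter.1 hx).2)
                  calc Real.sqrt (∑ x ∈ g.support.filter
                        (fun x => (QuotientGroup.mk x : G ⧸ H) = q), ‖ϕ (z⁻¹ * x)‖ ^ 2)
                      ≤ Real.sqrt (cL2 H ϕ (z⁻¹ • q) ^ 2) := Real.sqrt_le_sqrt this
                    _ = cL2 H ϕ (z⁻¹ • q) := Real.sqrt_sq (cL2_nonneg _ _)
                · rw [cL2_apply]
  by_cases hg0 : l2Norm g = 0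
  · rw [hg0]
    exact hRHS0
  · have hgpos : 0 < l2Norm g := lt_of_le_of_ne (l2Norm_nonneg _) (Ne.symm hg0)
    have key2 : l2Norm g * l2Norm g
        ≤ (Real.sqrt (K * ((R : ℝ) + 1) ^ D) * (l2Norm f * l2Norm ϕ)) * l2Norm g := by
      calc l2Norm g * l2Norm g = l2Norm g ^ 2 := (sq _).symm
        _ ≤ _ := key
        _ = _ := by ring
    have h4 := le_of_mul_le_mul_right key2 hgpos
    calc l2Norm g ≤ Real.sqrt (K * ((R : ℝ) + 1) ^ D) * (l2Norm f * l2Norm ϕ) := h4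
      _ ≤ (Real.sqrt K * ((R : ℝ) + 1) ^ (⌈D⌉₊ : ℕ)) * (l2Norm f * l2Norm ϕ) :=
          mul_le_mul_of_nonneg_right (sqrt_poly_le hK.le hD.le R)
            (mul_nonneg (l2Norm_nonneg _) (l2Norm_nonneg _))
      _ = Real.sqrt K * ((R : ℝ) + 1) ^ (⌈D⌉₊ : ℕ) * l2Norm f * l2Norm ϕ := by ring

lemma pairRD_of_polyBound (S : Set G) (H : Subgroup G) (hq : qrCoeffPolyBound S H) :
    PairRD S H := by
  obtain ⟨K, D, hK, hD, h2⟩ := hq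
  refine ⟨Real.sqrt K, ⌈D⌉₊, Real.sqrt_nonneg _, ?_⟩
  intro R f ϕ hf
  set g : G →₀ ℂ := conv f ϕ with hg
  rw [l21Norm_eq_cL1, l21Norm_eq_cL1, l21Norm_eq_cL1]
  have hRHS0 : (0 : ℝ) ≤ Real.sqrt K * ((R : ℝ) + 1) ^ (⌈D⌉₊ : ℕ) * l2Norm (cL1 H f) *
      l2Norm (cL1 H ϕ) := by
    have h1 : (0:ℝ) ≤ ((R : ℝ) + 1) ^ (⌈D⌉₊ : ℕ) := by positivity
    exact mul_nonneg (mul_nonneg (mul_nonneg (Real.sqrt_nonneg _) h1) (l2Norm_nonneg _))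
      (l2Norm_nonneg _)
  have key : l2Norm (cL1 H g) ^ 2
      ≤ Real.sqrt (K * ((R : ℝ) + 1) ^ D) *
        (l2Norm f * (l2Norm (cL1 H ϕ) * l2Norm (cL1 H g))) := by
    have h3 := core S H hK h2 R f hf (cL1 H ϕ) (cL1 H g) (cL1_nonneg ϕ) (cL1_nonneg g)
      ((cL1 H g).support)
    refine le_trans ?_ h3
    rw [l2Norm_sq_eq (cL1 H g) subset_rfl]
    calc ∑ q ∈ (cL1 H g).support, ‖cL1 H g q‖ ^ 2
        = ∑ q ∈ (cL1 H g).support, cL1 H g q * cL1 H g q := by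
          refine Finset.sum_congr rfl fun q _ => ?_
          rw [Real.norm_eq_abs, sq_abs, sq]
      _ ≤ ∑ q ∈ (cL1 H g).support,
            (∑ z ∈ f.support, ‖f z‖ * cL1 H ϕ (z⁻¹ • q)) * cL1 H g q := by
          refine Finset.sum_le_sum fun q _ => ?_
          refine mul_le_mul_of_nonneg_right ?_ (cL1_nonneg _ _)
          rw [cL1_apply]
          calc ∑ x ∈ g.support.filter (fun x => (QuotientGroup.mk x : G ⧸ H) = q), ‖g x‖
              ≤ ∑ x ∈ g.support.filter (fun x => (QuotientGroup.mk x : G ⧸ H) = q),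
                  ∑ z ∈ f.support, ‖f z‖ * ‖ϕ (z⁻¹ * x)‖ :=
                Finset.sum_le_sum fun x _ => conv_norm_le f ϕ x
            _ = ∑ z ∈ f.support, ‖f z‖ *
                  ∑ x ∈ g.support.filter (fun x => (QuotientGroup.mk x : G ⧸ H) = q),
                    ‖ϕ (z⁻¹ * x)‖ := by
                simp_rw [Finset.mul_sum]
                exact Finset.sum_comm
            _ ≤ ∑ z ∈ f.support, ‖f z‖ * cL1 H ϕ (z⁻¹ • q) :=
                Finset.sum_le_sum fun z _ => mul_le_mul_of_nonneg_left
                  (sum_shift_le_cL1 ϕ z q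
                    (g.support.filter (fun x => (QuotientGroup.mk x : G ⧸ H) = q))
                    (fun x hx => (Finset.mem_filter.1 hx).2))
                  (norm_nonneg _)
      _ = ∑ z ∈ f.support, ‖f z‖ * ∑ q ∈ (cL1 H g).support, cL1 H ϕ (z⁻¹ • q) * cL1 H g q := by
          simp_rw [Finset.sum_mul, Finset.mul_sum, mul_assoc]
          exact Finset.sum_comm
  by_cases hg0 : l2Norm (cL1 H g) = 0
  · rw [hg0]
    exact hRHS0
  · have hgpos : 0 < l2Norm (cL1 H g) := lt_of_le_of_ne (l2Norm_nonneg _) (Ne.symm hg0)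
    have key2 : l2Norm (cL1 H g) * l2Norm (cL1 H g)
        ≤ (Real.sqrt (K * ((R : ℝ) + 1) ^ D) * (l2Norm f * l2Norm (cL1 H ϕ))) *
            l2Norm (cL1 H g) := by
      calc l2Norm (cL1 H g) * l2Norm (cL1 H g) = l2Norm (cL1 H g) ^ 2 := (sq _).symm
        _ ≤ _ := key
        _ = _ := by ring
    have h4 := le_of_mul_le_mul_right key2 hgpos
    calc l2Norm (cL1 H g)
        ≤ Real.sqrt (K * ((R : ℝ) + 1) ^ D) * (l2Norm f * l2Norm (cL1 H ϕ)) := h4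
      _ ≤ Real.sqrt (K * ((R : ℝ) + 1) ^ D) * (l2Norm (cL1 H f) * l2Norm (cL1 H ϕ)) :=
          mul_le_mul_of_nonneg_left
            (mul_le_mul_of_nonneg_right (l2_le_cL1 f) (l2Norm_nonneg _))
            (Real.sqrt_nonneg _)
      _ ≤ (Real.sqrt K * ((R : ℝ) + 1) ^ (⌈D⌉₊ : ℕ)) *
            (l2Norm (cL1 H f) * l2Norm (cL1 H ϕ)) :=
          mul_le_mul_of_nonneg_right (sqrt_poly_le hK.le hD.le R)
            (mul_nonneg (l2Norm_nonneg _) (l2Norm_nonneg _))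
      _ = Real.sqrt K * ((R : ℝ) + 1) ^ (⌈D⌉₊ : ℕ) * l2Norm (cL1 H f) * l2Norm (cL1 H ϕ) := by
          ring

end Aux6
section Aux7
open Finsupp Finset

lemma zeta2 : ∀ N : ℕ, ∑ n ∈ Finset.range (N + 1), (1 : ℝ) / ((n : ℝ) + 1) ^ 2
    ≤ 2 - 1 / ((N : ℝ) + 1) := by
  intro N
  induction N with
  | zero => norm_num
  | succ N ih =>
    rw [Finset.sum_range_succ]
    push_cast
    have h1 : (0 : ℝ) < (N : ℝ) + 1 := by positivity
    have h2 : (0 : ℝ) < (N : ℝ) + 2 := by positivity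
    have key : 1 / ((N : ℝ) + 2) ^ 2 ≤ 1 / ((N : ℝ) + 1) - 1 / ((N : ℝ) + 2) := by
      rw [div_sub_div _ _ h1.ne' h2.ne', div_le_div_iff₀ (by positivity) (by positivity)]
      ring_nf
      nlinarith
    have : ((N : ℝ) + 1 + 1) = (N : ℝ) + 2 := by ring
    rw [this]
    linarith [ih]

variable {G : Type*} [Group G]

lemma decay_to_poly (S : Set G) (H : Subgroup G) (h : qrCoeffDecay S H) :
    qrCoeffPolyBound S H := by
  obtain ⟨M, s, hM, hs, h1⟩ := h
  refine ⟨M, 2 * s, hM, by positivity, ?_⟩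
  intro ξ η hξ hη R F hF
  have key : ∀ γ ∈ F, ‖qrCoeff H γ ξ η‖ ^ 2 ≤ ((R : ℝ) + 1) ^ (2 * s) *
      (‖qrCoeff H γ ξ η‖ ^ 2 / ((1 : ℝ) + (wordLength S γ : ℝ)) ^ (2 * s)) := by
    intro γ hγ
    have hd : (0 : ℝ) < ((1 : ℝ) + (wordLength S γ : ℝ)) ^ (2 * s) :=
      Real.rpow_pos_of_pos (by positivity) _
    have hR : (0 : ℝ) < ((R : ℝ) + 1) ^ (2 * s) := Real.rpow_pos_of_pos (by positivity) _
    have hc : ((1 : ℝ) + (wordLength S γ : ℝ)) ^ (2 * s) ≤ ((R : ℝ) + 1) ^ (2 * s) := by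
      refine Real.rpow_le_rpow (by positivity) ?_ (by positivity)
      have := hF γ hγ
      have : ((wordLength S γ : ℝ)) ≤ (R : ℝ) := by exact_mod_cast this
      linarith
    calc ‖qrCoeff H γ ξ η‖ ^ 2
        = ((R : ℝ) + 1) ^ (2 * s) * (‖qrCoeff H γ ξ η‖ ^ 2 / ((R : ℝ) + 1) ^ (2 * s)) := by
          field_simp
      _ ≤ _ := by
          refine mul_le_mul_of_nonneg_left ?_ hR.le
          exact div_le_div_of_nonneg_left (sq_nonneg _) hd hc
  calc ∑ γ ∈ F, ‖qrCoeff H γ ξ η‖ ^ 2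
      ≤ ∑ γ ∈ F, ((R : ℝ) + 1) ^ (2 * s) *
          (‖qrCoeff H γ ξ η‖ ^ 2 / ((1 : ℝ) + (wordLength S γ : ℝ)) ^ (2 * s)) :=
        Finset.sum_le_sum key
    _ = ((R : ℝ) + 1) ^ (2 * s) * ∑ γ ∈ F,
          ‖qrCoeff H γ ξ η‖ ^ 2 / ((1 : ℝ) + (wordLength S γ : ℝ)) ^ (2 * s) :=
        (Finset.mul_sum _ _ _).symm
    _ ≤ ((R : ℝ) + 1) ^ (2 * s) * M := by
        refine mul_le_mul_of_nonneg_left (h1 ξ η hξ hη F) ?_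
        exact (Real.rpow_pos_of_pos (by positivity) _).le
    _ = M * ((R : ℝ) + 1) ^ (2 * s) := mul_comm _ _

lemma poly_to_decay (S : Set G) (H : Subgroup G) (h : qrCoeffPolyBound S H) :
    qrCoeffDecay S H := by
  obtain ⟨K, D, hK, hD, h2⟩ := h
  refine ⟨2 * K, (D + 2) / 2, by linarith, by linarith, ?_⟩
  intro ξ η hξ hη F
  have hexp : 2 * ((D + 2) / 2) = D + 2 := by ring
  set N := F.sup (wordLength S) with hN
  have hmap : ∀ γ ∈ F, wordLength S γ ∈ Finset.range (N + 1) := fun γ hγ =>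
    Finset.mem_range.2 (Nat.lt_succ_of_le (Finset.le_sup hγ))
  rw [← Finset.sum_fiberwise_of_maps_to hmap]
  have hper : ∀ n ∈ Finset.range (N + 1),
      ∑ γ ∈ F.filter (fun γ => wordLength S γ = n),
        ‖qrCoeff H γ ξ η‖ ^ 2 / ((1 : ℝ) + (wordLength S γ : ℝ)) ^ (2 * ((D + 2) / 2))
      ≤ K * (1 / ((n : ℝ) + 1) ^ 2) := by
    intro n _
    have hb : (0 : ℝ) < (n : ℝ) + 1 := by positivity
    have h2n := h2 ξ η hξ hη n (F.filter (fun γ => wordLength S γ = n))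
      (fun γ hγ => le_of_eq (Finset.mem_filter.1 hγ).2)
    have hcg : ∀ γ ∈ F.filter (fun γ => wordLength S γ = n),
        ‖qrCoeff H γ ξ η‖ ^ 2 / ((1 : ℝ) + (wordLength S γ : ℝ)) ^ (2 * ((D + 2) / 2))
        = ‖qrCoeff H γ ξ η‖ ^ 2 / ((n : ℝ) + 1) ^ (D + 2) := by
      intro γ hγ
      rw [hexp, (Finset.mem_filter.1 hγ).2, add_comm (1 : ℝ) ((n : ℝ))]
    rw [Finset.sum_congr rfl hcg, ← Finset.sum_div,
      div_le_iff₀ (Real.rpow_pos_of_pos hb _)]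
    have hsplit : (K * (1 / ((n : ℝ) + 1) ^ 2)) * ((n : ℝ) + 1) ^ (D + 2)
        = K * ((n : ℝ) + 1) ^ D := by
      rw [Real.rpow_add hb]
      have h22 : ((n : ℝ) + 1) ^ ((2 : ℝ)) = ((n : ℝ) + 1) ^ (2 : ℕ) := by
        rw [← Real.rpow_natCast]
        norm_num
      rw [h22]
      have hne : ((n : ℝ) + 1) ^ (2 : ℕ) ≠ 0 := by positivity
      field_simp
    rw [hsplit]
    exact h2n
  calc ∑ n ∈ Finset.range (N + 1), ∑ γ ∈ F.filter (fun γ => wordLength S γ = n),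
        ‖qrCoeff H γ ξ η‖ ^ 2 / ((1 : ℝ) + (wordLength S γ : ℝ)) ^ (2 * ((D + 2) / 2))
      ≤ ∑ n ∈ Finset.range (N + 1), K * (1 / ((n : ℝ) + 1) ^ 2) := Finset.sum_le_sum hper
    _ = K * ∑ n ∈ Finset.range (N + 1), 1 / ((n : ℝ) + 1) ^ 2 := (Finset.mul_sum _ _ _).symm
    _ ≤ K * 2 := by
        refine mul_le_mul_of_nonneg_left ?_ hK.le
        have := zeta2 N
        have h0 : (0 : ℝ) ≤ 1 / ((N : ℝ) + 1) := by positivity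
        linarith
    _ = 2 * K := mul_comm _ _

end Aux7
/-- the two decay conditions on the coefficients of the
quasi-regular representation are equivalent, and each implies both the rapid
decay property for `G` and for the pair `(G,H)`. -/
theorem statement10 {G : Type*} [Group G] (S : Set G) (hfin : S.Finite)
    (hsym : ∀ s ∈ S, s⁻¹ ∈ S) (hgen : Subgroup.closure S = ⊤) (H : Subgroup G) :
    (qrCoeffDecay S H ↔ qrCoeffPolyBound S H) ∧
    (qrCoeffDecay S H → GroupRD S ∧ PairRD S H) ∧
    (qrCoeffPolyBound S H → GroupRD S ∧ PairRD S H) := by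
  refine ⟨⟨decay_to_poly S H, poly_to_decay S H⟩, ?_, ?_⟩
  · intro h1
    have h2 := decay_to_poly S H h1
    exact ⟨groupRD_of_polyBound S H h2, pairRD_of_polyBound S H h2⟩
  · intro h2
    exact ⟨groupRD_of_polyBound S H h2, pairRD_of_polyBound S H h2⟩
end

section
/- Let G be a group generated by a finite symmetric set S with word length ℓ, let K ⊴ G be a normal subgroup of G, and let H ≤ G be a subgroup with K ≤ H. If the pair (G,H) has the rapid decay property, then the pair (G/K, H/K) has the rapid decay property, where G/K is generated by the image of S with its associated word length, and H/K is the image of H in G/K. -/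
open scoped BigOperators

attribute [local instance] Classical.propDecidable

section AuxLemmas

open Finsupp

lemma mapDomain_apply_sum {α β M : Type*} [AddCommMonoid M] (p : α → β) (u : α →₀ M) (b : β) :
    Finsupp.mapDomain p u b = ∑ a ∈ u.support, if p a = b then u a else 0 := by
  classical
  rw [Finsupp.mapDomain, Finsupp.sum_apply, Finsupp.sum]
  exact Finset.sum_congr rfl fun a _ => Finsupp.single_apply

lemma mapDomain_nonneg' {α β : Type*} (p : α → β) {u : α →₀ ℝ} (hu : ∀ a, 0 ≤ u a) (b : β) :
    0 ≤ Finsupp.mapDomain p u b := by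
  rw [mapDomain_apply_sum]
  exact Finset.sum_nonneg fun a _ => by by_cases h : p a = b <;> simp [h, hu a]

lemma mapDomain_mono' {α β : Type*} (p : α → β) {u v : α →₀ ℝ}
    (hu : ∀ a, 0 ≤ u a) (huv : ∀ a, u a ≤ v a) (b : β) :
    Finsupp.mapDomain p u b ≤ Finsupp.mapDomain p v b := by
  classical
  rw [mapDomain_apply_sum, mapDomain_apply_sum]
  have hsub : u.support ⊆ v.support := by
    intro a ha
    rw [Finsupp.mem_support_iff] at ha ⊢
    intro hv
    exact ha (le_antisymm (hv ▸ huv a) (hu a))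
  calc ∑ a ∈ u.support, (if p a = b then u a else 0)
      ≤ ∑ a ∈ v.support, (if p a = b then u a else 0) := by
        refine Finset.sum_le_sum_of_subset_of_nonneg hsub fun a _ _ => ?_
        by_cases h : p a = b <;> simp [h, hu a]
    _ ≤ ∑ a ∈ v.support, (if p a = b then v a else 0) := by
        refine Finset.sum_le_sum fun a _ => ?_
        by_cases h : p a = b <;> simp [h, huv a]

lemma l2Norm_mono' {α : Type*} {u v : α →₀ ℝ} (hu : ∀ a, 0 ≤ u a) (huv : ∀ a, u a ≤ v a) :
    l2Norm u ≤ l2Norm v := by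
  unfold l2Norm
  apply Real.sqrt_le_sqrt
  have hsub : u.support ⊆ v.support := by
    intro a ha
    rw [Finsupp.mem_support_iff] at ha ⊢
    intro hv
    exact ha (le_antisymm (hv ▸ huv a) (hu a))
  calc ∑ x ∈ u.support, ‖u x‖ ^ 2
      ≤ ∑ x ∈ u.support, ‖v x‖ ^ 2 := by
        refine Finset.sum_le_sum fun x _ => ?_
        rw [Real.norm_eq_abs, Real.norm_eq_abs, abs_of_nonneg (hu x),
          abs_of_nonneg ((hu x).trans (huv x))]
        exact pow_le_pow_left₀ (hu x) (huv x) 2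
    _ ≤ ∑ x ∈ v.support, ‖v x‖ ^ 2 := by
        refine Finset.sum_le_sum_of_subset_of_nonneg hsub fun x _ _ => by positivity

lemma l2Norm_mapDomain_inj {α β k : Type*} [NormedAddCommGroup k] {e : α → β}
    (he : Function.Injective e) (u : α →₀ k) :
    l2Norm (Finsupp.mapDomain e u) = l2Norm u := by
  classical
  unfold l2Norm
  rw [Finsupp.mapDomain_support_of_injective he,
    Finset.sum_image (fun a _ b _ h => he h)]
  congr 1
  exact Finset.sum_congr rfl fun a _ => by rw [Finsupp.mapDomain_apply he]

lemma mapRange_norm_mapDomain {α β k : Type*} [NormedAddCommGroup k] {e : α → β}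
    (he : Function.Injective e) (u : α →₀ k) :
    (Finsupp.mapDomain e u).mapRange norm norm_zero =
      Finsupp.mapDomain e (u.mapRange norm norm_zero) := by
  ext b
  by_cases hb : b ∈ Set.range e
  · obtain ⟨a, rfl⟩ := hb
    rw [Finsupp.mapRange_apply, Finsupp.mapDomain_apply he, Finsupp.mapDomain_apply he,
      Finsupp.mapRange_apply]
  · rw [Finsupp.mapRange_apply, Finsupp.mapDomain_notin_range _ _ hb,
      Finsupp.mapDomain_notin_range _ _ hb, norm_zero]

lemma norm_mapDomain_le {α β : Type*} (p : α → β) (u : α →₀ ℂ) (b : β) :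
    ‖Finsupp.mapDomain p u b‖ ≤ Finsupp.mapDomain p (u.mapRange norm norm_zero) b := by
  classical
  rw [mapDomain_apply_sum, mapDomain_apply_sum]
  have hsupp : (u.mapRange norm norm_zero).support = u.support := by
    ext a
    simp [Finsupp.mem_support_iff]
  rw [hsupp]
  refine le_trans (norm_sum_le _ _) (le_of_eq ?_)
  refine Finset.sum_congr rfl fun a _ => ?_
  rw [Finsupp.mapRange_apply, apply_ite norm, norm_zero]

lemma conv_eq_mul {G : Type*} [Group G] (f ϕ : G →₀ ℂ) :
    conv f ϕ = (MonoidAlgebra.ofCoeff f * MonoidAlgebra.ofCoeff ϕ).coeff := by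
  rw [MonoidAlgebra.mul_def]
  rw [conv, Finsupp.sum, Finsupp.sum, MonoidAlgebra.coeff_sum]
  refine Finset.sum_congr rfl fun z _ => ?_
  rw [Finsupp.sum, MonoidAlgebra.coeff_sum, Finsupp.mapDomain, Finsupp.smul_sum, Finsupp.sum]
  refine Finset.sum_congr rfl fun a _ => ?_
  rw [Finsupp.smul_single, smul_eq_mul, MonoidAlgebra.coeff_single]

lemma mapDomain_conv {G H : Type*} [Group G] [Group H] (π : G →* H) (f ϕ : G →₀ ℂ) :
    Finsupp.mapDomain π (conv f ϕ) = conv (Finsupp.mapDomain π f) (Finsupp.mapDomain π ϕ) := by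
  rw [conv_eq_mul, conv_eq_mul]
  exact congrArg MonoidAlgebra.coeff (MonoidAlgebra.mapDomain_mul π (.ofCoeff f) (.ofCoeff ϕ))

lemma l2_push_le {α β γ δ : Type*} (p : α → β) (m : β → γ) (mH : α → δ) (e : δ → γ)
    (he : Function.Injective e) (hcomm : ∀ a, m (p a) = e (mH a)) (Ψ : α →₀ ℂ) :
    l2Norm (Finsupp.mapDomain m ((Finsupp.mapDomain p Ψ).mapRange norm norm_zero)) ≤
      l2Norm (Finsupp.mapDomain mH (Ψ.mapRange norm norm_zero)) := by
  have hu : ∀ b, (0:ℝ) ≤ ((Finsupp.mapDomain p Ψ).mapRange norm norm_zero) b := fun b => by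
    rw [Finsupp.mapRange_apply]; exact norm_nonneg _
  have huv : ∀ b, ((Finsupp.mapDomain p Ψ).mapRange norm norm_zero) b ≤
      Finsupp.mapDomain p (Ψ.mapRange norm norm_zero) b := fun b => by
    rw [Finsupp.mapRange_apply]; exact norm_mapDomain_le p Ψ b
  have step1 : l2Norm (Finsupp.mapDomain m ((Finsupp.mapDomain p Ψ).mapRange norm norm_zero)) ≤
      l2Norm (Finsupp.mapDomain m (Finsupp.mapDomain p (Ψ.mapRange norm norm_zero))) :=
    l2Norm_mono' (fun b => mapDomain_nonneg' m hu b) (fun b => mapDomain_mono' m hu huv b)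
  refine step1.trans (le_of_eq ?_)
  rw [← Finsupp.mapDomain_comp, show m ∘ p = e ∘ mH from funext hcomm,
    Finsupp.mapDomain_comp, l2Norm_mapDomain_inj he]

lemma l21_lift_eq {α β γ δ : Type*} (lift : β → α) (hlift : Function.Injective lift)
    (mH : α → δ) (mQ : β → γ) (e : δ → γ) (he : Function.Injective e)
    (hcomm : ∀ q, e (mH (lift q)) = mQ q) (f : β →₀ ℂ) :
    l2Norm (Finsupp.mapDomain mH ((Finsupp.mapDomain lift f).mapRange norm norm_zero)) =
      l2Norm (Finsupp.mapDomain mQ (f.mapRange norm norm_zero)) := by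
  rw [mapRange_norm_mapDomain hlift, ← Finsupp.mapDomain_comp,
    ← l2Norm_mapDomain_inj he (Finsupp.mapDomain (mH ∘ lift) (f.mapRange norm norm_zero)),
    ← Finsupp.mapDomain_comp, show e ∘ (mH ∘ lift) = mQ from funext hcomm]

lemma exists_list_lift {G : Type*} [Group G] (S : Set G) (K : Subgroup G) [K.Normal] :
    ∀ (l' : List (G ⧸ K)), (∀ s ∈ l', s ∈ (QuotientGroup.mk : G → G ⧸ K) '' S) →
      ∃ l : List G, (∀ t ∈ l, t ∈ S) ∧ l.map (QuotientGroup.mk : G → G ⧸ K) = l'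
  | [], _ => ⟨[], by simp, rfl⟩
  | s :: l', h => by
    obtain ⟨t, ht, hts⟩ := h s List.mem_cons_self
    obtain ⟨l, hl, hmap⟩ := exists_list_lift S K l' (fun x hx => h x (List.mem_cons_of_mem _ hx))
    refine ⟨t :: l, ?_, by simp [hmap, hts]⟩
    intro u hu
    rcases List.mem_cons.mp hu with rfl | hu
    · exact ht
    · exact hl u hu

lemma wordLength_lift {G : Type*} [Group G] (S : Set G)
    (hsym : ∀ s ∈ S, s⁻¹ ∈ S) (hgen : Subgroup.closure S = ⊤) (K : Subgroup G) [K.Normal]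
    (q : G ⧸ K) :
    ∃ g : G, (QuotientGroup.mk g : G ⧸ K) = q ∧
      wordLength S g ≤ wordLength ((QuotientGroup.mk : G → G ⧸ K) '' S) q := by
  classical
  obtain ⟨g₀, hg₀⟩ := Quotient.exists_rep q
  have hg₀' : (QuotientGroup.mk g₀ : G ⧸ K) = q := hg₀
  -- g₀ has a word in S
  have hmem : g₀ ∈ Submonoid.closure (S ∪ S⁻¹) := by
    rw [← Subgroup.closure_toSubmonoid]
    show g₀ ∈ (Subgroup.closure S).toSubmonoid
    rw [hgen]; trivial
  obtain ⟨l₀, hl₀, hl₀prod⟩ := Submonoid.exists_list_of_mem_closure hmem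
  have hl₀S : ∀ y ∈ l₀, y ∈ S := by
    intro y hy
    rcases hl₀ y hy with h | h
    · exact h
    · have := hsym _ (Set.mem_inv.mp h)
      rwa [inv_inv] at this
  -- the defining set for the quotient word length is nonempty
  set T : Set ℕ := {n | ∃ l : List (G ⧸ K), (∀ s ∈ l, s ∈ (QuotientGroup.mk : G → G ⧸ K) '' S) ∧
    l.length = n ∧ l.prod = q} with hT
  have hTne : T.Nonempty := by
    refine ⟨l₀.length, l₀.map (QuotientGroup.mk : G → G ⧸ K), ?_, by simp, ?_⟩
    · intro s hs
      obtain ⟨y, hy, rfl⟩ := List.mem_map.mp hs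
      exact ⟨y, hl₀S y hy, rfl⟩
    · rw [← QuotientGroup.coe_mk', ← map_list_prod (QuotientGroup.mk' K) l₀,
        QuotientGroup.mk'_apply, hl₀prod, hg₀']
  have hmemT : wordLength ((QuotientGroup.mk : G → G ⧸ K) '' S) q ∈ T := Nat.sInf_mem hTne
  obtain ⟨l', hl'S, hl'len, hl'prod⟩ := hmemT
  obtain ⟨l, hlS, hlmap⟩ := exists_list_lift S K l' hl'S
  refine ⟨l.prod, ?_, ?_⟩
  · rw [← QuotientGroup.mk'_apply, map_list_prod (QuotientGroup.mk' K) l,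
      QuotientGroup.coe_mk', hlmap, hl'prod]
  · apply Nat.sInf_le
    refine ⟨l, hlS, ?_, rfl⟩
    rw [← hl'len, ← hlmap, List.length_map]

end AuxLemmas

/-- if `K ⊴ G` is a normal subgroup contained in the subgroup `H`
and the pair `(G,H)` has rapid decay, then so does the pair `(G/K, H/K)`. -/

theorem statement12 {G : Type*} [Group G] (S : Set G) (hfin : S.Finite)
    (hsym : ∀ s ∈ S, s⁻¹ ∈ S) (hgen : Subgroup.closure S = ⊤)
    (K : Subgroup G) [K.Normal] (H : Subgroup G) (hKH : K ≤ H)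
    (hRD : PairRD S H) :
    PairRD ((QuotientGroup.mk : G → G ⧸ K) '' S)
      (H.map (QuotientGroup.mk' K)) := by
  obtain ⟨C, D, hC, hRD⟩ := hRD
  refine ⟨C, D, hC, ?_⟩
  intro R f ϕ hsupp
  -- lift along the quotient map with controlled word length
  have hlift := wordLength_lift S hsym hgen K
  choose lift hliftmk hliftlen using hlift
  have hlift_inj : Function.Injective lift := fun a b h => by
    rw [← hliftmk a, ← hliftmk b, h]
  set F := Finsupp.mapDomain lift f with hFdef
  set Φ := Finsupp.mapDomain lift ϕ with hΦdef
  -- the injection e : G/H → (G/K)/(H/K)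
  have hlcongr : ∀ a b : G, @Setoid.r G (QuotientGroup.leftRel H) a b →
      (QuotientGroup.mk (QuotientGroup.mk a : G ⧸ K) :
        (G ⧸ K) ⧸ H.map (QuotientGroup.mk' K)) = QuotientGroup.mk (QuotientGroup.mk b) := by
    intro a b hab
    have hab' : a⁻¹ * b ∈ H := (QuotientGroup.leftRel_apply).mp hab
    refine (QuotientGroup.eq).mpr ?_
    refine Subgroup.mem_map.mpr ⟨a⁻¹ * b, hab', ?_⟩
    simp
  set e : G ⧸ H → (G ⧸ K) ⧸ H.map (QuotientGroup.mk' K) :=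
    fun z => Quotient.liftOn' z
      (fun g => (QuotientGroup.mk (QuotientGroup.mk g : G ⧸ K))) hlcongr with hedef
  have he_mk : ∀ g : G, e (QuotientGroup.mk g) =
      QuotientGroup.mk (QuotientGroup.mk g : G ⧸ K) := fun g => rfl
  have he_inj : Function.Injective e := by
    intro a b
    induction a using Quotient.inductionOn' with | h a =>
    induction b using Quotient.inductionOn' with | h b =>
    intro hab
    have hab2 : (QuotientGroup.mk (QuotientGroup.mk a : G ⧸ K) :
        (G ⧸ K) ⧸ H.map (QuotientGroup.mk' K)) = QuotientGroup.mk (QuotientGroup.mk b) := hab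
    rw [QuotientGroup.eq] at hab2
    obtain ⟨h, hh, hhab⟩ := Subgroup.mem_map.mp hab2
    have hk : (QuotientGroup.mk (h⁻¹ * (a⁻¹ * b)) : G ⧸ K) = 1 := by
      have : (QuotientGroup.mk' K) h = (QuotientGroup.mk a : G ⧸ K)⁻¹ * QuotientGroup.mk b := hhab
      simp only [QuotientGroup.mk_mul, QuotientGroup.mk_inv]
      rw [QuotientGroup.mk'_apply] at this
      rw [← this]
      simp
    have hK : h⁻¹ * (a⁻¹ * b) ∈ K := (QuotientGroup.eq_one_iff _).mp hk
    have hH : a⁻¹ * b ∈ H := by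
      have := H.mul_mem hh (hKH hK)
      rwa [mul_inv_cancel_left] at this
    exact Quotient.sound' ((QuotientGroup.leftRel_apply).mpr hH)
  -- F is supported in the ball of radius R
  have hsuppF : supportedInBall S R F := by
    intro x hx
    obtain ⟨q, hq, rfl⟩ := Finset.mem_image.mp (Finsupp.mapDomain_support hx)
    exact le_trans (hliftlen q) (hsupp q hq)
  -- pushing F, Φ back down gives f, ϕ
  have hmklift : (QuotientGroup.mk : G → G ⧸ K) ∘ lift = id := funext fun q => hliftmk q
  have hF : Finsupp.mapDomain (QuotientGroup.mk : G → G ⧸ K) F = f := by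
    rw [hFdef, ← Finsupp.mapDomain_comp, hmklift, Finsupp.mapDomain_id]
  have hΦ : Finsupp.mapDomain (QuotientGroup.mk : G → G ⧸ K) Φ = ϕ := by
    rw [hΦdef, ← Finsupp.mapDomain_comp, hmklift, Finsupp.mapDomain_id]
  have hcoe : ⇑(QuotientGroup.mk' K) = (QuotientGroup.mk : G → G ⧸ K) := rfl
  have hconv : conv f ϕ = Finsupp.mapDomain (QuotientGroup.mk : G → G ⧸ K) (conv F Φ) := by
    rw [← hF, ← hΦ, ← hcoe, ← mapDomain_conv]
  -- norm identities
  have hecomm : ∀ q : G ⧸ K,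
      e (QuotientGroup.mk (lift q)) = QuotientGroup.mk q := by
    intro q
    rw [he_mk (lift q), hliftmk q]
  have hFnorm : l21Norm H F = l21Norm (H.map (QuotientGroup.mk' K)) f := by
    unfold l21Norm
    exact l21_lift_eq lift hlift_inj _ _ e he_inj hecomm f
  have hΦnorm : l21Norm H Φ = l21Norm (H.map (QuotientGroup.mk' K)) ϕ := by
    unfold l21Norm
    exact l21_lift_eq lift hlift_inj _ _ e he_inj hecomm ϕ
  calc l21Norm (H.map (QuotientGroup.mk' K)) (conv f ϕ)
      = l21Norm (H.map (QuotientGroup.mk' K))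
          (Finsupp.mapDomain (QuotientGroup.mk : G → G ⧸ K) (conv F Φ)) := by rw [hconv]
    _ ≤ l21Norm H (conv F Φ) := by
        unfold l21Norm
        exact l2_push_le _ _ _ e he_inj (fun g => (he_mk g).symm) (conv F Φ)
    _ ≤ C * ((R : ℝ) + 1) ^ D * l21Norm H F * l21Norm H Φ := hRD R F Φ hsuppF
    _ = C * ((R : ℝ) + 1) ^ D * l21Norm (H.map (QuotientGroup.mk' K)) f *
          l21Norm (H.map (QuotientGroup.mk' K)) ϕ := by rw [hFnorm, hΦnorm]
end
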